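/- (Cantelli's strong law of large numbers) Let Y_1, Y_2, ... be independent real-valued random variables with finite fourth moments such that E[ |Y_n − E[Y_n]|^4 ] ≤ C for all n ≥ 1, for some constant C < ∞. Then, with S_n = Y_1 + ... + Y_n, we have (S_n − E[S_n]) / n → 0 almost surely as n → ∞. -/

import Mathlib

open MeasureTheory Filter ProbabilityTheory


-- step 1: integrability of lower powers
lemma cantelli_pow_int {Ω : Type*} [MeasurableSpace Ω] {P : Measure Ω} [IsProbabilityMeasure P]
    {f : Ω → ℝ} (hf : Measurable f) (h4 : Integrable (fun ω => f ω ^ 4) P) :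
    ∀ k ≤ 4, Integrable (fun ω => f ω ^ k) P := by
  intro k hk
  refine Integrable.mono' (h4.add (integrable_const 1)) ((hf.pow_const k).aestronglyMeasurable) ?_
  filter_upwards with ω
  have h1 : ‖f ω ^ k‖ = |f ω| ^ k := by rw [Real.norm_eq_abs, abs_pow]
  rw [h1]
  have h2 : |f ω| ^ k ≤ |f ω| ^ 4 + 1 := by
    rcases le_or_gt (|f ω|) 1 with h | h
    · have := pow_le_one₀ (abs_nonneg _) h (n := k)
      nlinarith [pow_nonneg (abs_nonneg (f ω)) 4]
    · have := pow_le_pow_right₀ h.le hk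
      linarith
  calc |f ω| ^ k ≤ |f ω| ^ 4 + 1 := h2
    _ = f ω ^ 4 + 1 := by rw [Even.pow_abs (by decide : Even 4)]

lemma cantelli_main_aux {Ω : Type*} [MeasurableSpace Ω] (P : Measure Ω) [IsProbabilityMeasure P]
    (X : ℕ → Ω → ℝ) (D : ℝ) (hD : 1 ≤ D)
    (hmeas : ∀ n, Measurable (X n))
    (hindep : iIndepFun X P)
    (hint : ∀ n, ∀ k ≤ 4, Integrable (fun ω => X n ω ^ k) P)
    (hzero : ∀ n, ∫ ω, X n ω ∂P = 0)
    (hmom2 : ∀ n, ∫ ω, X n ω ^ 2 ∂P ≤ Real.sqrt D)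
    (hmom4 : ∀ n, ∫ ω, X n ω ^ 4 ∂P ≤ D) :
    ∀ n : ℕ, (∀ k ≤ 4, Integrable (fun ω => (∑ i ∈ Finset.Icc 1 n, X i ω) ^ k) P) ∧
      (∫ ω, (∑ i ∈ Finset.Icc 1 n, X i ω) ∂P = 0) ∧
      (∫ ω, (∑ i ∈ Finset.Icc 1 n, X i ω) ^ 2 ∂P ≤ n * Real.sqrt D) ∧
      (∫ ω, (∑ i ∈ Finset.Icc 1 n, X i ω) ^ 4 ∂P ≤ 3 * D * n ^ 2) := by
  have hsqD : (0:ℝ) < Real.sqrt D := Real.sqrt_pos.2 (by linarith)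
  intro n
  induction n with
  | zero =>
      simp only [show Finset.Icc 1 0 = (∅ : Finset ℕ) by simp, Finset.sum_empty]
      refine ⟨fun k hk => ?_, by simp, by simp, by simp⟩
      simpa using (integrable_const ((0:ℝ) ^ k) (μ := P))
  | succ n IH =>
      obtain ⟨IHint, IH1, IH2, IH4⟩ := IH
      set T : Ω → ℝ := fun ω => ∑ i ∈ Finset.Icc 1 n, X i ω with hT
      set Z : Ω → ℝ := fun ω => X (n+1) ω with hZ
      have hins : Finset.Icc 1 (n+1) = insert (n+1) (Finset.Icc 1 n) :=
        (Finset.insert_Icc_right_eq_Icc_add_one (by omega)).symm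
      have hsum : ∀ ω, (∑ i ∈ Finset.Icc 1 (n+1), X i ω) = Z ω + T ω := by
        intro ω; rw [hins, Finset.sum_insert (by simp)]
      have hTmeas : Measurable T := by
        apply Finset.measurable_sum; intro i _; exact hmeas i
      have hTZ : IndepFun T Z P := by
        have h := hindep.indepFun_finsetSum_of_notMem hmeas
          (s := Finset.Icc 1 n) (i := n+1) (by simp)
        have he : (∑ j ∈ Finset.Icc 1 n, X j) = T := by
          funext ω; simp [hT, Finset.sum_apply]
        rwa [he] at h
      have hTZpow : ∀ a b : ℕ, IndepFun (fun ω => T ω ^ a) (fun ω => Z ω ^ b) P := by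
        intro a b
        exact hTZ.comp (measurable_id.pow_const a) (measurable_id.pow_const b)
      have hTa : ∀ a ≤ 4, Integrable (fun ω => T ω ^ a) P := IHint
      have hZb : ∀ b ≤ 4, Integrable (fun ω => Z ω ^ b) P := hint (n+1)
      have hcross : ∀ a b : ℕ, a ≤ 4 → b ≤ 4 →
          Integrable (fun ω => T ω ^ a * Z ω ^ b) P := by
        intro a b ha hb
        exact (hTZpow a b).integrable_mul (hTa a ha) (hZb b hb)
      have hcrossval : ∀ a b : ℕ, a ≤ 4 → b ≤ 4 →
          ∫ ω, T ω ^ a * Z ω ^ b ∂P = (∫ ω, T ω ^ a ∂P) * (∫ ω, Z ω ^ b ∂P) := by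
        intro a b ha hb
        exact (hTZpow a b).integral_fun_mul_eq_mul_integral (hTa a ha).1 (hZb b hb).1
      have hZ1 : Integrable Z P := by
        have h := hZb 1 (by norm_num); simpa [pow_one] using h
      have hT1 : Integrable T P := by
        have h := hTa 1 (by norm_num); simpa [pow_one] using h
      have ht1 : ∫ ω, T ω ^ 1 ∂P = 0 := by simp only [pow_one]; exact IH1
      have hz1 : ∫ ω, Z ω ^ 1 ∂P = 0 := by simp only [pow_one]; exact hzero (n+1)
      refine ⟨?_, ?_, ?_, ?_⟩
      · intro k hk
        have he : (fun ω => (∑ i ∈ Finset.Icc 1 (n+1), X i ω) ^ k)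
            = fun ω => ∑ m ∈ Finset.range (k+1),
                (k.choose m : ℝ) * (T ω ^ (k - m) * Z ω ^ m) := by
          funext ω
          rw [hsum ω, add_pow]
          refine Finset.sum_congr rfl fun m hm => by ring
        rw [he]
        apply integrable_finset_sum
        intro m hm
        have hm' : m ≤ k := Finset.mem_range_succ_iff.mp hm
        exact (hcross (k - m) m (by omega) (by omega)).const_mul _
      · have he : (fun ω => (∑ i ∈ Finset.Icc 1 (n+1), X i ω))
            = fun ω => Z ω + T ω := funext hsum
        rw [he, integral_add hZ1 hT1]
        have hz0 : ∫ a, Z a ∂P = 0 := hzero (n+1)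
        have ht0 : ∫ a, T a ∂P = 0 := IH1
        rw [hz0, ht0]; norm_num
      · have he : (fun ω => (∑ i ∈ Finset.Icc 1 (n+1), X i ω) ^ 2)
            = fun ω => T ω ^ 2 + (2 * (T ω ^ 1 * Z ω ^ 1) + Z ω ^ 2) := by
          funext ω; rw [hsum ω]; ring
        have i11 : Integrable (fun ω => 2 * (T ω ^ 1 * Z ω ^ 1)) P :=
          (hcross 1 1 (by norm_num) (by norm_num)).const_mul (2:ℝ)
        have iB : Integrable (fun ω => 2 * (T ω ^ 1 * Z ω ^ 1) + Z ω ^ 2) P :=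
          i11.add (hZb 2 (by norm_num))
        rw [he, integral_add (hTa 2 (by norm_num)) iB,
          integral_add i11 (hZb 2 (by norm_num)), integral_const_mul,
          hcrossval 1 1 (by norm_num) (by norm_num), ht1]
        have hA : ∫ a, T a ^ 2 ∂P ≤ (n : ℝ) * Real.sqrt D := IH2
        have hB : ∫ a, Z a ^ 2 ∂P ≤ Real.sqrt D := hmom2 (n+1)
        push_cast
        nlinarith [hA, hB]
      · have he : (fun ω => (∑ i ∈ Finset.Icc 1 (n+1), X i ω) ^ 4)
            = fun ω => T ω ^ 4 + (4 * (T ω ^ 3 * Z ω ^ 1) + (6 * (T ω ^ 2 * Z ω ^ 2)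
                + (4 * (T ω ^ 1 * Z ω ^ 3) + Z ω ^ 4))) := by
          funext ω; rw [hsum ω]; ring
        have i31 : Integrable (fun ω => 4 * (T ω ^ 3 * Z ω ^ 1)) P :=
          (hcross 3 1 (by norm_num) (by norm_num)).const_mul (4:ℝ)
        have i22 : Integrable (fun ω => 6 * (T ω ^ 2 * Z ω ^ 2)) P :=
          (hcross 2 2 (by norm_num) (by norm_num)).const_mul (6:ℝ)
        have i13 : Integrable (fun ω => 4 * (T ω ^ 1 * Z ω ^ 3)) P :=
          (hcross 1 3 (by norm_num) (by norm_num)).const_mul (4:ℝ)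
        have iC : Integrable (fun ω => 4 * (T ω ^ 1 * Z ω ^ 3) + Z ω ^ 4) P :=
          i13.add (hZb 4 (by norm_num))
        have iB : Integrable (fun ω => 6 * (T ω ^ 2 * Z ω ^ 2)
            + (4 * (T ω ^ 1 * Z ω ^ 3) + Z ω ^ 4)) P := i22.add iC
        have iA : Integrable (fun ω => 4 * (T ω ^ 3 * Z ω ^ 1) + (6 * (T ω ^ 2 * Z ω ^ 2)
            + (4 * (T ω ^ 1 * Z ω ^ 3) + Z ω ^ 4))) P := i31.add iB
        rw [he, integral_add (hTa 4 (by norm_num)) iA,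
          integral_add i31 iB,
          integral_add i22 iC,
          integral_add i13 (hZb 4 (by norm_num)),
          integral_const_mul, integral_const_mul, integral_const_mul,
          hcrossval 3 1 (by norm_num) (by norm_num),
          hcrossval 2 2 (by norm_num) (by norm_num),
          hcrossval 1 3 (by norm_num) (by norm_num), ht1, hz1]
        have h4T : ∫ a, T a ^ 4 ∂P ≤ 3 * D * (n : ℝ) ^ 2 := IH4
        have h2T : ∫ a, T a ^ 2 ∂P ≤ (n : ℝ) * Real.sqrt D := IH2
        have h2Tn : 0 ≤ ∫ a, T a ^ 2 ∂P := integral_nonneg fun a => sq_nonneg _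
        have h2Z : ∫ a, Z a ^ 2 ∂P ≤ Real.sqrt D := hmom2 (n+1)
        have h2Zn : 0 ≤ ∫ a, Z a ^ 2 ∂P := integral_nonneg fun a => sq_nonneg _
        have h4Z : ∫ a, Z a ^ 4 ∂P ≤ D := hmom4 (n+1)
        have hDD : Real.sqrt D * Real.sqrt D = D := Real.mul_self_sqrt (by linarith)
        have hn0 : (0:ℝ) ≤ (n:ℝ) := Nat.cast_nonneg n
        have hprod : (∫ a, T a ^ 2 ∂P) * (∫ a, Z a ^ 2 ∂P) ≤ (n:ℝ) * D := by
          nlinarith [mul_le_mul h2T h2Z h2Zn (by positivity : (0:ℝ) ≤ (n:ℝ) * Real.sqrt D)]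
        push_cast
        nlinarith [h4T, h4Z, hprod]


/-- **Cantelli's strong law of large numbers.**
If `Y 1, Y 2, ...` are independent real random variables with uniformly bounded
fourth central moments (`E[|Y n - E[Y n]|^4] ≤ C`), then
`(S n - E[S n]) / n → 0` almost surely, where `S n = Y 1 + ... + Y n`. -/
theorem cantelli_strong_law_of_large_numbers
    {Ω : Type*} [MeasurableSpace Ω] (P : Measure Ω) [IsProbabilityMeasure P]
    (Y : ℕ → Ω → ℝ) (C : ℝ)
    (hmeas : ∀ n, Measurable (Y n))
    (hindep : iIndepFun Y P)
    (hmom4 : ∀ n, Integrable (fun ω => (Y n ω) ^ 4) P)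
    (hbound : ∀ n, ∫ ω, |Y n ω - ∫ ω', Y n ω' ∂P| ^ 4 ∂P ≤ C) :
    ∀ᵐ ω ∂P,
      Tendsto
        (fun n : ℕ =>
          ((∑ i ∈ Finset.Icc 1 n, Y i ω) - ∫ ω', ∑ i ∈ Finset.Icc 1 n, Y i ω' ∂P) / n)
        atTop (nhds 0) := by
  set D : ℝ := max C 1 with hDdef
  have hD : 1 ≤ D := le_max_right _ _
  have hD0 : (0:ℝ) < D := lt_of_lt_of_le one_pos hD
  have hsD : (0:ℝ) < Real.sqrt D := Real.sqrt_pos.2 hD0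
  set X : ℕ → Ω → ℝ := fun n ω => Y n ω - ∫ ω', Y n ω' ∂P with hXdef
  have hYint : ∀ n, ∀ k ≤ 4, Integrable (fun ω => Y n ω ^ k) P :=
    fun n => cantelli_pow_int (hmeas n) (hmom4 n)
  have hY1 : ∀ n, Integrable (Y n) P := by
    intro n; simpa [pow_one] using hYint n 1 (by norm_num)
  have hXmeas : ∀ n, Measurable (X n) := fun n => (hmeas n).sub measurable_const
  have hXindep : iIndepFun X P := by
    have := hindep.comp (fun i x => x - ∫ ω', Y i ω' ∂P)
      (fun i => measurable_id.sub measurable_const)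
    exact this
  have hX4 : ∀ n, Integrable (fun ω => X n ω ^ 4) P := by
    intro n
    refine Integrable.mono'
      (((hmom4 n).add (integrable_const ((∫ ω', Y n ω' ∂P) ^ 4))).const_mul 8)
      ((hXmeas n).pow_const 4).aestronglyMeasurable ?_
    filter_upwards with ω
    have h1 : ‖X n ω ^ 4‖ = X n ω ^ 4 := by
      rw [Real.norm_eq_abs, abs_of_nonneg (by positivity)]
    rw [h1]
    show (Y n ω - ∫ ω', Y n ω' ∂P) ^ 4 ≤ 8 * (Y n ω ^ 4 + (∫ ω', Y n ω' ∂P) ^ 4)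
    set a := Y n ω; set b := ∫ ω', Y n ω' ∂P
    nlinarith [sq_nonneg (a + b), sq_nonneg (a - b), sq_nonneg (a^2 - b^2),
      sq_nonneg (a^2 + b^2), sq_nonneg (a*b), sq_nonneg a, sq_nonneg b]
  have hXint : ∀ n, ∀ k ≤ 4, Integrable (fun ω => X n ω ^ k) P :=
    fun n => cantelli_pow_int (hXmeas n) (hX4 n)
  have hXzero : ∀ n, ∫ ω, X n ω ∂P = 0 := by
    intro n
    rw [show (fun ω => X n ω) = fun ω => Y n ω - ∫ ω', Y n ω' ∂P from rfl,
      integral_sub (hY1 n) (integrable_const _), integral_const]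
    simp [measure_univ]
  have hmom4X : ∀ n, ∫ ω, X n ω ^ 4 ∂P ≤ D := by
    intro n
    have h := hbound n
    have he : (fun ω => |Y n ω - ∫ ω', Y n ω' ∂P| ^ 4) = fun ω => X n ω ^ 4 := by
      funext ω; rw [Even.pow_abs (by decide : Even 4)]
    rw [he] at h
    exact h.trans (le_max_left C 1)
  have hmom2X : ∀ n, ∫ ω, X n ω ^ 2 ∂P ≤ Real.sqrt D := by
    intro n
    have h4 := hmom4X n
    have hpt : ∀ ω, X n ω ^ 2 ≤ (X n ω ^ 4 + D) / (2 * Real.sqrt D) := by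
      intro ω
      rw [le_div_iff₀ (by positivity)]
      nlinarith [sq_nonneg (X n ω ^ 2 - Real.sqrt D), Real.sq_sqrt hD0.le]
    have hintR : Integrable (fun ω => (X n ω ^ 4 + D) / (2 * Real.sqrt D)) P :=
      ((hX4 n).add (integrable_const D)).div_const _
    have hmono := integral_mono (hXint n 2 (by norm_num)) hintR hpt
    refine hmono.trans ?_
    rw [integral_div, integral_add (hX4 n) (integrable_const D), integral_const]
    simp only [measure_univ, ENNReal.toReal_one, smul_eq_mul, one_mul, probReal_univ]
    rw [div_le_iff₀ (by positivity)]
    nlinarith [Real.mul_self_sqrt hD0.le]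
  have haux := cantelli_main_aux P X D hD hXmeas hXindep hXint hXzero hmom2X hmom4X
  have hTint4 : ∀ n, Integrable (fun ω => (∑ i ∈ Finset.Icc 1 n, X i ω) ^ 4) P :=
    fun n => (haux n).1 4 le_rfl
  have hT4 : ∀ n, ∫ ω, (∑ i ∈ Finset.Icc 1 n, X i ω) ^ 4 ∂P ≤ 3 * D * (n:ℝ) ^ 2 :=
    fun n => (haux n).2.2.2
  have hdivpow : ∀ n : ℕ, (fun ω => ((∑ i ∈ Finset.Icc 1 n, X i ω) / (n:ℝ)) ^ 4)
      = fun ω => ((∑ i ∈ Finset.Icc 1 n, X i ω) ^ 4) / (n:ℝ) ^ 4 := by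
    intro n; funext ω; rw [div_pow]
  have hu_int : ∀ n : ℕ, Integrable (fun ω => ((∑ i ∈ Finset.Icc 1 n, X i ω) / (n:ℝ)) ^ 4) P := by
    intro n; rw [hdivpow n]; exact (hTint4 n).div_const _
  have hu_val : ∀ n : ℕ, ∫ ω, ((∑ i ∈ Finset.Icc 1 n, X i ω) / (n:ℝ)) ^ 4 ∂P
      ≤ 3 * D / (n:ℝ) ^ 2 := by
    intro n
    rcases Nat.eq_zero_or_pos n with rfl | hn
    · simp
    have hn0 : (0:ℝ) < (n:ℝ) := by exact_mod_cast hn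
    rw [hdivpow n, integral_div]
    have heq : 3 * D * (n:ℝ) ^ 2 / (n:ℝ) ^ 4 = 3 * D / (n:ℝ) ^ 2 := by
      field_simp
    rw [← heq]
    exact (div_le_div_iff_of_pos_right (by positivity)).2 (hT4 n)
  -- measurability of the normalized sums
  have hTmeasN : ∀ n : ℕ, Measurable (fun ω => ((∑ i ∈ Finset.Icc 1 n, X i ω) / (n:ℝ)) ^ 4) :=
    fun n => (((Finset.measurable_sum _ (fun i _ => hXmeas i)).div_const _).pow_const 4)
  -- summability of the bounds
  have hb : Summable (fun n : ℕ => 3 * D / (n:ℝ) ^ 2) := by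
    have h1 : Summable (fun n : ℕ => (1:ℝ) / (n:ℝ) ^ 2) :=
      (Real.summable_one_div_nat_pow (p := 2)).2 (by norm_num)
    have h2 := h1.mul_left (3 * D)
    refine h2.congr fun n => ?_
    rw [mul_one_div]
  have hbnn : ∀ n : ℕ, (0:ℝ) ≤ 3 * D / (n:ℝ) ^ 2 := fun n => by positivity
  -- lintegral computation
  have hlin : ∀ n : ℕ, ∫⁻ ω, ENNReal.ofReal (((∑ i ∈ Finset.Icc 1 n, X i ω) / (n:ℝ)) ^ 4) ∂P
      = ENNReal.ofReal (∫ ω, ((∑ i ∈ Finset.Icc 1 n, X i ω) / (n:ℝ)) ^ 4 ∂P) :=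
    fun n => (ofReal_integral_eq_lintegral_ofReal (hu_int n)
      (ae_of_all _ fun ω => by positivity)).symm
  have hsum_lt : (∑' n : ℕ, ∫⁻ ω, ENNReal.ofReal
      (((∑ i ∈ Finset.Icc 1 n, X i ω) / (n:ℝ)) ^ 4) ∂P) < ⊤ := by
    have hle : (∑' n : ℕ, ∫⁻ ω, ENNReal.ofReal
        (((∑ i ∈ Finset.Icc 1 n, X i ω) / (n:ℝ)) ^ 4) ∂P)
        ≤ ∑' n : ℕ, ENNReal.ofReal (3 * D / (n:ℝ) ^ 2) := by
      refine ENNReal.tsum_le_tsum fun n => ?_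
      rw [hlin n]
      exact ENNReal.ofReal_le_ofReal (hu_val n)
    refine lt_of_le_of_lt hle ?_
    rw [← ENNReal.ofReal_tsum_of_nonneg hbnn hb]
    exact ENNReal.ofReal_lt_top
  have hlint : ∫⁻ ω, (∑' n : ℕ, ENNReal.ofReal
      (((∑ i ∈ Finset.Icc 1 n, X i ω) / (n:ℝ)) ^ 4)) ∂P < ⊤ := by
    rw [lintegral_tsum (fun n => ((hTmeasN n).ennreal_ofReal).aemeasurable)]
    exact hsum_lt
  have hae : ∀ᵐ ω ∂P, (∑' n : ℕ, ENNReal.ofReal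
      (((∑ i ∈ Finset.Icc 1 n, X i ω) / (n:ℝ)) ^ 4)) < ⊤ :=
    ae_lt_top (Measurable.ennreal_tsum (fun n => (hTmeasN n).ennreal_ofReal)) hlint.ne
  -- representation of the target sequence
  have hrepr : ∀ (ω : Ω) (n : ℕ),
      ((∑ i ∈ Finset.Icc 1 n, Y i ω) - ∫ ω', ∑ i ∈ Finset.Icc 1 n, Y i ω' ∂P) / (n:ℝ)
      = (∑ i ∈ Finset.Icc 1 n, X i ω) / (n:ℝ) := by
    intro ω n
    congr 1
    rw [integral_finset_sum _ (fun i _ => hY1 i), ← Finset.sum_sub_distrib]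
  filter_upwards [hae] with ω hω
  have hsummable : Summable (fun n : ℕ => ((∑ i ∈ Finset.Icc 1 n, X i ω) / (n:ℝ)) ^ 4) := by
    have h := ENNReal.summable_toReal hω.ne
    refine h.congr fun n => ?_
    rw [ENNReal.toReal_ofReal (by positivity)]
  have hten4 : Tendsto (fun n : ℕ => ((∑ i ∈ Finset.Icc 1 n, X i ω) / (n:ℝ)) ^ 4)
      atTop (nhds 0) := hsummable.tendsto_atTop_zero
  have habs : Tendsto (fun n : ℕ => |(∑ i ∈ Finset.Icc 1 n, X i ω) / (n:ℝ)|)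
      atTop (nhds 0) := by
    have hcont : ContinuousAt (fun x : ℝ => x ^ ((1:ℝ)/4)) 0 :=
      Real.continuousAt_rpow_const 0 _ (Or.inr (by norm_num))
    have h := hcont.tendsto.comp hten4
    rw [Real.zero_rpow (by norm_num)] at h
    refine h.congr fun n => ?_
    show (((∑ i ∈ Finset.Icc 1 n, X i ω) / (n:ℝ)) ^ 4) ^ ((1:ℝ)/4)
      = |(∑ i ∈ Finset.Icc 1 n, X i ω) / (n:ℝ)|
    rw [← Even.pow_abs (by decide : Even 4), ← Real.rpow_natCast
      (|(∑ i ∈ Finset.Icc 1 n, X i ω) / (n:ℝ)|) 4, ← Real.rpow_mul (abs_nonneg _)]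
    norm_num
  have hX0 : Tendsto (fun n : ℕ => (∑ i ∈ Finset.Icc 1 n, X i ω) / (n:ℝ))
      atTop (nhds 0) := (tendsto_zero_iff_abs_tendsto_zero _).2 habs
  exact hX0.congr fun n => (hrepr ω n).symm
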